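/- Let k ≥ 7, let V be a finite set partitioned into disjoint nonempty sets A₁, …, A_k, and let E = { (⋃_{i∈α} A_i) ∪ (⋃_{j∈β} A_j) : α, β intervals of {1, …, k} }. Then a linear ordering π of V is an ABABA-free ordering of the hypergraph (V, E) if and only if π has structure A₁, A₂, …, A_k or structure A_k, A_{k−1}, …, A₁. -/

import Mathlib

/-- `π` is a linear ordering of the vertex set `Vs`: a duplicate-free list
consisting of exactly the elements of `Vs`. -/
def IsOrderingOf {α : Type*} (Vs : Set α) (π : List α) : Prop :=
  π.Nodup ∧ ∀ v, v ∈ π ↔ v ∈ Vs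

/-- The sets `A`, `B` form an alternating pattern of length `n` with respect to
the ordering `π`: there are `n` vertices occurring in this order in `π`, those
at even positions belonging to `A \ B` and those at odd positions to `B \ A`.
For `n = 2k` this is an `(AB)^k` pattern; for `n = 2k+1` it is an `(AB)^k A`
pattern (so `n = 4` gives `ABAB` and `n = 5` gives `ABABA`). -/
def FormPattern {α : Type*} (n : ℕ) (A B : Set α) (π : List α) : Prop :=
  ∃ w : List α, w.Sublist π ∧ w.length = n ∧
    ∀ (i : ℕ) (h : i < w.length),
      (i % 2 = 0 → w[i]'h ∈ A \ B) ∧ (i % 2 = 1 → w[i]'h ∈ B \ A)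

/-- `π` is a pattern-free ordering for the edge set `E`: no pair of edges forms
an alternating pattern of length `n` with respect to `π`. -/
def FreeOrdering {α : Type*} (n : ℕ) (E : Set (Set α)) (π : List α) : Prop :=
  ∀ A ∈ E, ∀ B ∈ E, ¬ FormPattern n A B π

/-- Two orderings are equivalent if one is obtained from the other by cyclic
shifts, or by reversing the order and then applying cyclic shifts. -/
def EquivOrderings {α : Type*} (π₁ π₂ : List α) : Prop :=
  (∃ m, π₂ = π₁.rotate m) ∨ (∃ m, π₂ = π₁.reverse.rotate m)

/-- `S` is an interval of `{1, …, N}`: a set of consecutive integers. -/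
def IsNatInterval (N : ℕ) (S : Set ℕ) : Prop :=
  S ⊆ Set.Icc 1 N ∧ ∃ a b, S = Set.Icc a b

/-- `v` comes (strictly) before `w` in the ordering `π`. -/
def Precedes {α : Type*} (π : List α) (v w : α) : Prop :=
  [v, w].Sublist π

/-- The ordering `π` has structure `A 1, A 2, …, A k`: for `i ≠ j` in
`{1, …, k}`, an element of `A i` comes before an element of `A j`
if and only if `i < j`. -/
def HasStructure {α : Type*} (k : ℕ) (A : ℕ → Set α) (π : List α) : Prop :=
  ∀ i ∈ Set.Icc 1 k, ∀ j ∈ Set.Icc 1 k, i ≠ j →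
    ∀ v ∈ A i, ∀ w ∈ A j, (Precedes π v w ↔ i < j)

namespace TwoIntervalAux

def Alt5 (S T : Set ℕ) (s : List ℕ) : Prop :=
  ∃ x1 y1 x2 y2 x3 : ℕ, [x1, y1, x2, y2, x3].Sublist s ∧
    x1 ∈ S ∧ x2 ∈ S ∧ x3 ∈ S ∧ y1 ∈ T ∧ y2 ∈ T

def Good (k : ℕ) (S : Set ℕ) : Prop :=
  ∃ a b c d : ℕ, 1 ≤ a ∧ 1 ≤ c ∧ b ≤ k ∧ d ≤ k ∧ S = Set.Icc a b ∪ Set.Icc c d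

lemma sub5 {s : List ℕ} {i1 i2 i3 i4 i5 : ℕ} (h12 : i1 < i2) (h23 : i2 < i3)
    (h34 : i3 < i4) (h45 : i4 < i5) (h5 : i5 < s.length) :
    [s.getD i1 0, s.getD i2 0, s.getD i3 0, s.getD i4 0, s.getD i5 0].Sublist s := by
  have h1 : i1 < s.length := by omega
  have h2 : i2 < s.length := by omega
  have h3 : i3 < s.length := by omega
  have h4 : i4 < s.length := by omega
  have := List.map_getElem_sublist (l := s)
    (is := [⟨i1, h1⟩, ⟨i2, h2⟩, ⟨i3, h3⟩, ⟨i4, h4⟩, ⟨i5, h5⟩]) (by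
      simp [List.pairwise_cons]
      omega)
  simpa [List.getD_eq_getElem, List.get_eq_getElem, h1, h2, h3, h4, h5] using this

structure Ctx (k u : ℕ) (s : List ℕ) : Prop where
  hk : 7 ≤ k
  hu1 : 1 ≤ u
  hu2 : u < k
  hrange : ∀ i, i < s.length → 1 ≤ s.getD i 0 ∧ s.getD i 0 ≤ k
  hsurj : ∀ v, 1 ≤ v → v ≤ k → ∃ i, i < s.length ∧ s.getD i 0 = v
  hfree : ∀ S T : Set ℕ, Good k S → Good k T → Disjoint S T → ¬ Alt5 S T s

namespace Ctx

variable {k u : ℕ} {s : List ℕ}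

lemma hit (C : Ctx k u s) {S T : Set ℕ} (hS : Good k S) (hT : Good k T)
    (hd : Disjoint S T) {i1 i2 i3 i4 i5 : ℕ} (h12 : i1 < i2) (h23 : i2 < i3)
    (h34 : i3 < i4) (h45 : i4 < i5) (h5 : i5 < s.length)
    (m1 : s.getD i1 0 ∈ S) (m2 : s.getD i2 0 ∈ T) (m3 : s.getD i3 0 ∈ S)
    (m4 : s.getD i4 0 ∈ T) (m5 : s.getD i5 0 ∈ S) : False :=
  C.hfree S T hS hT hd ⟨_, _, _, _, _, sub5 h12 h23 h34 h45 h5, m1, m3, m5, m2, m4⟩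

/-- Tool 1: a triple of high positions with different middle letter,
    flanked by a low position on each side. -/
lemma highTriple (C : Ctx k u s) {m0 i j l m1 : ℕ}
    (h01 : m0 < i) (hij : i < j) (hjl : j < l) (hl1 : l < m1) (h1n : m1 < s.length)
    (hm0 : s.getD m0 0 ≤ u) (hi : u < s.getD i 0) (hj : u < s.getD j 0)
    (hl : u < s.getD l 0) (hm1 : s.getD m1 0 ≤ u)
    (d1 : s.getD j 0 ≠ s.getD i 0) (d2 : s.getD j 0 ≠ s.getD l 0) : False := by
  have hri := C.hrange i (by omega); have hrj := C.hrange j (by omega)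
  have hrl := C.hrange l (by omega); have hrm0 := C.hrange m0 (by omega)
  have hrm1 := C.hrange m1 (by omega)
  have hu2 := C.hu2
  refine C.hit (S := Set.Icc 1 u ∪ Set.Icc (s.getD j 0) (s.getD j 0))
    (T := Set.Icc (s.getD i 0) (s.getD i 0) ∪ Set.Icc (s.getD l 0) (s.getD l 0))
    ⟨1, u, _, _, le_refl 1, hrj.1, by omega, hrj.2, rfl⟩
    ⟨_, _, _, _, hri.1, hrl.1, hri.2, hrl.2, rfl⟩
    (by rw [Set.disjoint_left]; intro a ha ha'
        simp only [Set.mem_union, Set.mem_Icc] at ha ha'; omega)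
    h01 hij hjl hl1 h1n ?_ ?_ ?_ ?_ ?_ <;>
    · simp only [Set.mem_union, Set.mem_Icc]; omega

/-- Tool 2: a triple of low positions with different middle letter,
    flanked by a high position on each side. -/
lemma lowTriple (C : Ctx k u s) {f0 i j l f1 : ℕ}
    (h01 : f0 < i) (hij : i < j) (hjl : j < l) (hl1 : l < f1) (h1n : f1 < s.length)
    (hf0 : u < s.getD f0 0) (hi : s.getD i 0 ≤ u) (hj : s.getD j 0 ≤ u)
    (hl : s.getD l 0 ≤ u) (hf1 : u < s.getD f1 0)
    (d1 : s.getD j 0 ≠ s.getD i 0) (d2 : s.getD j 0 ≠ s.getD l 0) : False := by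
  have hri := C.hrange i (by omega); have hrj := C.hrange j (by omega)
  have hrl := C.hrange l (by omega); have hrf0 := C.hrange f0 (by omega)
  have hrf1 := C.hrange f1 (by omega)
  have hu2 := C.hu2
  refine C.hit (S := Set.Icc (u+1) k ∪ Set.Icc (s.getD j 0) (s.getD j 0))
    (T := Set.Icc (s.getD i 0) (s.getD i 0) ∪ Set.Icc (s.getD l 0) (s.getD l 0))
    ⟨u+1, k, _, _, by omega, hrj.1, le_refl k, hrj.2, rfl⟩
    ⟨_, _, _, _, hri.1, hrl.1, hri.2, hrl.2, rfl⟩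
    (by rw [Set.disjoint_left]; intro a ha ha'
        simp only [Set.mem_union, Set.mem_Icc] at ha ha'; omega)
    h01 hij hjl hl1 h1n ?_ ?_ ?_ ?_ ?_ <;>
    · simp only [Set.mem_union, Set.mem_Icc]; omega

/-- Tool 3: low triple, then a high, then another low avoiding the middle letter. -/
lemma lowTriple_lowAfter (C : Ctx k u s) {i j l f m : ℕ}
    (hij : i < j) (hjl : j < l) (hlf : l < f) (hfm : f < m) (hmn : m < s.length)
    (hi : s.getD i 0 ≤ u) (hj : s.getD j 0 ≤ u) (hl : s.getD l 0 ≤ u)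
    (hf : u < s.getD f 0) (hm : s.getD m 0 ≤ u)
    (d1 : s.getD j 0 ≠ s.getD i 0) (d2 : s.getD j 0 ≠ s.getD l 0)
    (d3 : s.getD m 0 ≠ s.getD j 0) : False := by
  have hri := C.hrange i (by omega); have hrj := C.hrange j (by omega)
  have hrl := C.hrange l (by omega); have hrf := C.hrange f (by omega)
  have hrm := C.hrange m (by omega)
  have hu2 := C.hu2
  refine C.hit (S := Set.Icc 1 (s.getD j 0 - 1) ∪ Set.Icc (s.getD j 0 + 1) u)
    (T := Set.Icc (s.getD j 0) (s.getD j 0) ∪ Set.Icc (s.getD f 0) (s.getD f 0))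
    ⟨1, s.getD j 0 - 1, _, _, le_refl 1, by omega, by omega, by omega, rfl⟩
    ⟨_, _, _, _, hrj.1, hrf.1, hrj.2, hrf.2, rfl⟩
    (by rw [Set.disjoint_left]; intro a ha ha'
        simp only [Set.mem_union, Set.mem_Icc] at ha ha'; omega)
    hij hjl hlf hfm hmn ?_ ?_ ?_ ?_ ?_ <;>
    · simp only [Set.mem_union, Set.mem_Icc]; omega

/-- Tool 4: a low, then a high, then a low triple avoiding the first low's letter. -/
lemma lowTriple_lowBefore (C : Ctx k u s) {m f i j l : ℕ}
    (hmf : m < f) (hfi : f < i) (hij : i < j) (hjl : j < l) (hln : l < s.length)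
    (hm : s.getD m 0 ≤ u) (hf : u < s.getD f 0)
    (hi : s.getD i 0 ≤ u) (hj : s.getD j 0 ≤ u) (hl : s.getD l 0 ≤ u)
    (d1 : s.getD j 0 ≠ s.getD i 0) (d2 : s.getD j 0 ≠ s.getD l 0)
    (d3 : s.getD m 0 ≠ s.getD j 0) : False := by
  have hri := C.hrange i (by omega); have hrj := C.hrange j (by omega)
  have hrl := C.hrange l (by omega); have hrf := C.hrange f (by omega)
  have hrm := C.hrange m (by omega)
  have hu2 := C.hu2
  refine C.hit (S := Set.Icc 1 (s.getD j 0 - 1) ∪ Set.Icc (s.getD j 0 + 1) u)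
    (T := Set.Icc (s.getD j 0) (s.getD j 0) ∪ Set.Icc (s.getD f 0) (s.getD f 0))
    ⟨1, s.getD j 0 - 1, _, _, le_refl 1, by omega, by omega, by omega, rfl⟩
    ⟨_, _, _, _, hrj.1, hrf.1, hrj.2, hrf.2, rfl⟩
    (by rw [Set.disjoint_left]; intro a ha ha'
        simp only [Set.mem_union, Set.mem_Icc] at ha ha'; omega)
    hmf hfi hij hjl hln ?_ ?_ ?_ ?_ ?_ <;>
    · simp only [Set.mem_union, Set.mem_Icc]; omega

/-- Tool 5: a high (letter ≠ middle), a low, then a high triple. -/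
lemma highTriple_highBefore (C : Ctx k u s) {f x i j l : ℕ}
    (hfx : f < x) (hxi : x < i) (hij : i < j) (hjl : j < l) (hln : l < s.length)
    (hf : u < s.getD f 0) (hx : s.getD x 0 ≤ u)
    (hi : u < s.getD i 0) (hj : u < s.getD j 0) (hl : u < s.getD l 0)
    (d1 : s.getD j 0 ≠ s.getD i 0) (d2 : s.getD j 0 ≠ s.getD l 0)
    (d3 : s.getD f 0 ≠ s.getD j 0) : False := by
  have hri := C.hrange i (by omega); have hrj := C.hrange j (by omega)
  have hrl := C.hrange l (by omega); have hrf := C.hrange f (by omega)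
  have hrx := C.hrange x (by omega)
  have hu2 := C.hu2
  refine C.hit (S := Set.Icc (u+1) (s.getD j 0 - 1) ∪ Set.Icc (s.getD j 0 + 1) k)
    (T := Set.Icc (s.getD x 0) (s.getD x 0) ∪ Set.Icc (s.getD j 0) (s.getD j 0))
    ⟨u+1, s.getD j 0 - 1, _, _, by omega, by omega, by omega, le_refl k, rfl⟩
    ⟨_, _, _, _, hrx.1, hrj.1, hrx.2, hrj.2, rfl⟩
    (by rw [Set.disjoint_left]; intro a ha ha'
        simp only [Set.mem_union, Set.mem_Icc] at ha ha'; omega)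
    hfx hxi hij hjl hln ?_ ?_ ?_ ?_ ?_ <;>
    · simp only [Set.mem_union, Set.mem_Icc]; omega

/-- Tool 6: low, high, low, then two highs with distinct letters. -/
lemma twoHighTail (C : Ctx k u s) {x f e g h : ℕ}
    (hxf : x < f) (hfe : f < e) (heg : e < g) (hgh : g < h) (hhn : h < s.length)
    (hx : s.getD x 0 ≤ u) (hf : u < s.getD f 0) (he : s.getD e 0 ≤ u)
    (hg : u < s.getD g 0) (hh : u < s.getD h 0)
    (d1 : s.getD g 0 ≠ s.getD h 0) (d2 : s.getD f 0 ≠ s.getD h 0) : False := by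
  have hrg := C.hrange g (by omega); have hrh := C.hrange h (by omega)
  have hrf := C.hrange f (by omega); have hrx := C.hrange x (by omega)
  have hre := C.hrange e (by omega)
  have hu2 := C.hu2
  refine C.hit (S := Set.Icc 1 u ∪ Set.Icc (s.getD h 0) (s.getD h 0))
    (T := Set.Icc (s.getD f 0) (s.getD f 0) ∪ Set.Icc (s.getD g 0) (s.getD g 0))
    ⟨1, u, _, _, le_refl 1, hrh.1, by omega, hrh.2, rfl⟩
    ⟨_, _, _, _, hrf.1, hrg.1, hrf.2, hrg.2, rfl⟩
    (by rw [Set.disjoint_left]; intro a ha ha'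
        simp only [Set.mem_union, Set.mem_Icc] at ha ha'; omega)
    hxf hfe heg hgh hhn ?_ ?_ ?_ ?_ ?_ <;>
    · simp only [Set.mem_union, Set.mem_Icc]; omega

/-- Tool 7: two lows with distinct letters, a high, a low avoiding the first letter, a high. -/
lemma twoLowHead (C : Ctx k u s) {a b c m g : ℕ}
    (hab : a < b) (hbc : b < c) (hcm : c < m) (hmg : m < g) (hgn : g < s.length)
    (ha : s.getD a 0 ≤ u) (hb : s.getD b 0 ≤ u) (hc : u < s.getD c 0)
    (hm : s.getD m 0 ≤ u) (hg : u < s.getD g 0)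
    (d1 : s.getD a 0 ≠ s.getD b 0) (d2 : s.getD m 0 ≠ s.getD a 0) : False := by
  have hra := C.hrange a (by omega); have hrb := C.hrange b (by omega)
  have hrm := C.hrange m (by omega); have hrc := C.hrange c (by omega)
  have hrg := C.hrange g (by omega)
  have hu2 := C.hu2
  refine C.hit (S := Set.Icc (s.getD a 0) (s.getD a 0) ∪ Set.Icc (u+1) k)
    (T := Set.Icc (s.getD b 0) (s.getD b 0) ∪ Set.Icc (s.getD m 0) (s.getD m 0))
    ⟨_, _, u+1, k, hra.1, by omega, hra.2, le_refl k, rfl⟩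
    ⟨_, _, _, _, hrb.1, hrm.1, hrb.2, hrm.2, rfl⟩
    (by rw [Set.disjoint_left]; intro a' ha' ha''
        simp only [Set.mem_union, Set.mem_Icc] at ha' ha''; omega)
    hab hbc hcm hmg hgn ?_ ?_ ?_ ?_ ?_ <;>
    · simp only [Set.mem_union, Set.mem_Icc]; omega

end Ctx

/-- Sorting three positions carrying pairwise distinct letters. -/
lemma sort3 {P : ℕ → Prop} {t : ℕ → ℕ} {a b c : ℕ} (ha : P a) (hb : P b) (hc : P c)
    (hab : t a ≠ t b) (hac : t a ≠ t c) (hbc : t b ≠ t c) :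
    ∃ i j l, P i ∧ P j ∧ P l ∧ i < j ∧ j < l ∧
      t j ≠ t i ∧ t j ≠ t l ∧ t i ≠ t l := by
  rcases Nat.lt_trichotomy a b with h1 | h1 | h1
  · rcases Nat.lt_trichotomy b c with h2 | h2 | h2
    · exact ⟨a, b, c, ha, hb, hc, h1, h2, hab.symm, hbc, hac⟩
    · exact absurd (congrArg t h2) hbc
    · rcases Nat.lt_trichotomy a c with h3 | h3 | h3
      · exact ⟨a, c, b, ha, hc, hb, h3, h2, hac.symm, fun h => hbc h.symm, hab⟩
      · exact absurd (congrArg t h3) hac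
      · exact ⟨c, a, b, hc, ha, hb, h3, h1, hac, hab, fun h => hbc h.symm⟩
  · exact absurd (congrArg t h1) hab
  · rcases Nat.lt_trichotomy a c with h2 | h2 | h2
    · exact ⟨b, a, c, hb, ha, hc, h1, h2, hab, hac, hbc⟩
    · exact absurd (congrArg t h2) hac
    · rcases Nat.lt_trichotomy b c with h3 | h3 | h3
      · exact ⟨b, c, a, hb, hc, ha, h3, h2, hbc.symm, hac.symm, hab.symm⟩
      · exact absurd (congrArg t h3) hbc
      · exact ⟨c, b, a, hc, hb, ha, h3, h1, hbc, hab.symm, hac.symm⟩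

lemma ex3 {S : Finset ℕ} (h : 3 ≤ S.card) :
    ∃ a ∈ S, ∃ b ∈ S, ∃ c ∈ S, a ≠ b ∧ a ≠ c ∧ b ≠ c := by
  obtain ⟨a, ha⟩ := Finset.card_pos.mp (show 0 < S.card by omega)
  have h1 : 2 ≤ (S.erase a).card := by
    have := Finset.card_erase_of_mem ha; omega
  obtain ⟨b, hb⟩ := Finset.card_pos.mp (show 0 < (S.erase a).card by omega)
  have h2 : 1 ≤ ((S.erase a).erase b).card := by
    have := Finset.card_erase_of_mem hb; omega
  obtain ⟨c, hc⟩ := Finset.card_pos.mp (show 0 < ((S.erase a).erase b).card by omega)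
  have hbS := Finset.mem_of_mem_erase hb
  have hcS := Finset.mem_of_mem_erase (Finset.mem_of_mem_erase hc)
  refine ⟨a, ha, b, hbS, c, hcS, ?_, ?_, ?_⟩
  · exact fun h' => (Finset.ne_of_mem_erase hb) h'.symm
  · exact fun h' => (Finset.ne_of_mem_erase (Finset.mem_of_mem_erase hc)) h'.symm
  · exact fun h' => (Finset.ne_of_mem_erase hc) h'.symm


set_option maxHeartbeats 2000000 in
open Classical in
lemma Ctx.caseC {k u : ℕ} {s : List ℕ} (C : Ctx k u s) (Q : ℕ)
    (hQn : Q < s.length) (hQ : u < s.getD Q 0)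
    (h0 : s.getD 0 0 ≤ u) (hlast : s.getD (s.length - 1) 0 ≤ u) : False := by
  set n := s.length with hn
  have hn1 : 1 ≤ n := by omega
  have hQ0 : 0 < Q := by
    have : Q ≠ 0 := by rintro rfl; omega
    omega
  have hQl : Q < n - 1 := by
    have : Q ≠ n - 1 := by intro h; rw [h] at hQ; omega
    omega
  -- no three high positions with pairwise distinct letters
  have noHigh3 : ∀ a b c, a < n → b < n → c < n → u < s.getD a 0 → u < s.getD b 0 →
      u < s.getD c 0 → s.getD a 0 ≠ s.getD b 0 → s.getD a 0 ≠ s.getD c 0 →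
      s.getD b 0 ≠ s.getD c 0 → False := by
    intro a b c han hbn hcn hha hhb hhc dab dac dbc
    obtain ⟨i, j, l, Pi, Pj, Pl, hij, hjl, d1, d2, _⟩ :=
      sort3 (P := fun x => x < n ∧ u < s.getD x 0) (t := fun x => s.getD x 0)
        ⟨han, hha⟩ ⟨hbn, hhb⟩ ⟨hcn, hhc⟩ dab dac dbc
    have hi0 : 0 < i := by
      rcases Nat.eq_zero_or_pos i with h | h
      · exfalso; rw [h] at Pi; omega
      · exact h
    have hln : l < n - 1 := by
      rcases Nat.lt_or_ge l (n-1) with h | h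
      · exact h
      · exfalso; have : l = n - 1 := by omega
        rw [this] at Pl; omega
    exact C.highTriple hi0 hij hjl hln (by omega) h0 Pi.2 Pj.2 Pl.2 hlast d1 d2
  -- at most two distinct high letters, so u ≥ 5
  have hu5 : 5 ≤ u := by
    by_contra hcon
    have h3 : u + 3 ≤ k := by have := C.hk; omega
    obtain ⟨i1, hi1, e1⟩ := C.hsurj (u+1) (by omega) (by omega)
    obtain ⟨i2, hi2, e2⟩ := C.hsurj (u+2) (by omega) (by omega)
    obtain ⟨i3, hi3, e3⟩ := C.hsurj (u+3) (by omega) (by omega)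
    exact noHigh3 i1 i2 i3 hi1 hi2 hi3 (by omega) (by omega) (by omega)
      (by omega) (by omega) (by omega)
  -- low letters occur away from Q
  have lowOcc : ∀ v, 1 ≤ v → v ≤ u → ∃ i, i < n ∧ i ≠ Q ∧ s.getD i 0 = v := by
    intro v hv1 hvu
    obtain ⟨i, hin, hiv⟩ := C.hsurj v hv1 (by have := C.hu2; omega)
    exact ⟨i, hin, by rintro rfl; omega, hiv⟩
  -- tool: triple before Q with mid β, plus low after Q with letter ≠ β
  have T2 : ∀ i j l m, i < j → j < l → l < Q → Q < m → m < n →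
      s.getD i 0 ≤ u → s.getD j 0 ≤ u → s.getD l 0 ≤ u → s.getD m 0 ≤ u →
      s.getD j 0 ≠ s.getD i 0 → s.getD j 0 ≠ s.getD l 0 →
      s.getD m 0 ≠ s.getD j 0 → False := by
    intro i j l m hij hjl hlQ hQm hmn hi hj hl hm d1 d2 d3
    exact C.lowTriple_lowAfter hij hjl hlQ hQm hmn hi hj hl hQ hm d1 d2 d3
  have T3 : ∀ m i j l, m < Q → Q < i → i < j → j < l → l < n →
      s.getD m 0 ≤ u → s.getD i 0 ≤ u → s.getD j 0 ≤ u → s.getD l 0 ≤ u →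
      s.getD j 0 ≠ s.getD i 0 → s.getD j 0 ≠ s.getD l 0 →
      s.getD m 0 ≠ s.getD j 0 → False := by
    intro m i j l hmQ hQi hij hjl hln hm hi hj hl d1 d2 d3
    exact C.lowTriple_lowBefore hmQ hQi hij hjl hln hm hQ hi hj hl d1 d2 d3
  -- the letters 1..5 are low; split them according to occurrence before Q
  set OccP1 : ℕ → Prop := fun v => ∃ i, i < Q ∧ s.getD i 0 = v with hOcc
  set F5 : Finset ℕ := Finset.Icc 1 5 with hF5
  set A : Finset ℕ := F5.filter (fun v => OccP1 v) with hA
  set B : Finset ℕ := F5.filter (fun v => ¬ OccP1 v) with hB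
  have hcards : A.card + B.card = 5 := by
    rw [hA, hB, Finset.card_filter_add_card_filter_not]
    simp [hF5]
  have hAlow : ∀ v ∈ A, 1 ≤ v ∧ v ≤ u ∧ OccP1 v := by
    intro v hv
    rw [hA, Finset.mem_filter, hF5, Finset.mem_Icc] at hv
    exact ⟨hv.1.1, by omega, hv.2⟩
  have hBlow : ∀ v ∈ B, 1 ≤ v ∧ v ≤ u ∧ ∃ i, Q < i ∧ i < n ∧ s.getD i 0 = v := by
    intro v hv
    rw [hB, Finset.mem_filter, hF5, Finset.mem_Icc] at hv
    have hv1 : 1 ≤ v := hv.1.1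
    have hvu : v ≤ u := by omega
    obtain ⟨i, hin, hiQ, hiv⟩ := lowOcc v hv1 hvu
    refine ⟨hv1, hvu, i, ?_, hin, hiv⟩
    rcases Nat.lt_trichotomy i Q with h | h | h
    · exact absurd ⟨i, h, hiv⟩ hv.2
    · exact absurd h hiQ
    · exact h
  -- a triple of distinct low letters occurring before Q, avoiding mids where needed
  have tripleA : ∀ v1 v2 v3, v1 ∈ A → v2 ∈ A → v3 ∈ A → v1 ≠ v2 → v1 ≠ v3 → v2 ≠ v3 →
      ∃ i j l, i < j ∧ j < l ∧ l < Q ∧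
        s.getD i 0 ≤ u ∧ s.getD j 0 ≤ u ∧ s.getD l 0 ≤ u ∧
        s.getD j 0 ≠ s.getD i 0 ∧ s.getD j 0 ≠ s.getD l 0 ∧
        s.getD j 0 ∈ ({v1, v2, v3} : Set ℕ) := by
    intro v1 v2 v3 h1 h2 h3 d12 d13 d23
    obtain ⟨hv1a, hv1b, p1, hp1, e1⟩ := hAlow v1 h1
    obtain ⟨hv2a, hv2b, p2, hp2, e2⟩ := hAlow v2 h2
    obtain ⟨hv3a, hv3b, p3, hp3, e3⟩ := hAlow v3 h3
    have q1 : p1 < Q ∧ s.getD p1 0 ≤ u ∧ s.getD p1 0 ∈ ({v1, v2, v3} : Set ℕ) := by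
      refine ⟨hp1, ?_, ?_⟩ <;> rw [e1]
      · exact hv1b
      · simp
    have q2 : p2 < Q ∧ s.getD p2 0 ≤ u ∧ s.getD p2 0 ∈ ({v1, v2, v3} : Set ℕ) := by
      refine ⟨hp2, ?_, ?_⟩ <;> rw [e2]
      · exact hv2b
      · simp
    have q3 : p3 < Q ∧ s.getD p3 0 ≤ u ∧ s.getD p3 0 ∈ ({v1, v2, v3} : Set ℕ) := by
      refine ⟨hp3, ?_, ?_⟩ <;> rw [e3]
      · exact hv3b
      · simp
    have d12' : s.getD p1 0 ≠ s.getD p2 0 := by rw [e1, e2]; exact d12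
    have d13' : s.getD p1 0 ≠ s.getD p3 0 := by rw [e1, e3]; exact d13
    have d23' : s.getD p2 0 ≠ s.getD p3 0 := by rw [e2, e3]; exact d23
    obtain ⟨i, j, l, Pi, Pj, Pl, hij, hjl, dji, djl, _⟩ :=
      sort3 (P := fun x => x < Q ∧ s.getD x 0 ≤ u ∧ s.getD x 0 ∈ ({v1, v2, v3} : Set ℕ))
        (t := fun x => s.getD x 0) q1 q2 q3 d12' d13' d23'
    exact ⟨i, j, l, hij, hjl, Pl.1, Pi.2.1, Pj.2.1, Pl.2.1, dji, djl, Pj.2.2⟩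
  have tripleB : ∀ v1 v2 v3, v1 ∈ B → v2 ∈ B → v3 ∈ B → v1 ≠ v2 → v1 ≠ v3 → v2 ≠ v3 →
      ∃ i j l, Q < i ∧ i < j ∧ j < l ∧ l < n ∧
        s.getD i 0 ≤ u ∧ s.getD j 0 ≤ u ∧ s.getD l 0 ≤ u ∧
        s.getD j 0 ≠ s.getD i 0 ∧ s.getD j 0 ≠ s.getD l 0 ∧
        s.getD j 0 ∈ ({v1, v2, v3} : Set ℕ) := by
    intro v1 v2 v3 h1 h2 h3 d12 d13 d23
    obtain ⟨hv1a, hv1b, p1, hp1, hp1n, e1⟩ := hBlow v1 h1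
    obtain ⟨hv2a, hv2b, p2, hp2, hp2n, e2⟩ := hBlow v2 h2
    obtain ⟨hv3a, hv3b, p3, hp3, hp3n, e3⟩ := hBlow v3 h3
    have q1 : Q < p1 ∧ p1 < n ∧ s.getD p1 0 ≤ u ∧ s.getD p1 0 ∈ ({v1, v2, v3} : Set ℕ) := by
      refine ⟨hp1, hp1n, ?_, ?_⟩ <;> rw [e1]
      · exact hv1b
      · simp
    have q2 : Q < p2 ∧ p2 < n ∧ s.getD p2 0 ≤ u ∧ s.getD p2 0 ∈ ({v1, v2, v3} : Set ℕ) := by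
      refine ⟨hp2, hp2n, ?_, ?_⟩ <;> rw [e2]
      · exact hv2b
      · simp
    have q3 : Q < p3 ∧ p3 < n ∧ s.getD p3 0 ≤ u ∧ s.getD p3 0 ∈ ({v1, v2, v3} : Set ℕ) := by
      refine ⟨hp3, hp3n, ?_, ?_⟩ <;> rw [e3]
      · exact hv3b
      · simp
    have d12' : s.getD p1 0 ≠ s.getD p2 0 := by rw [e1, e2]; exact d12
    have d13' : s.getD p1 0 ≠ s.getD p3 0 := by rw [e1, e3]; exact d13
    have d23' : s.getD p2 0 ≠ s.getD p3 0 := by rw [e2, e3]; exact d23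
    obtain ⟨i, j, l, Pi, Pj, Pl, hij, hjl, dji, djl, _⟩ :=
      sort3 (P := fun x => Q < x ∧ x < n ∧ s.getD x 0 ≤ u ∧ s.getD x 0 ∈ ({v1, v2, v3} : Set ℕ))
        (t := fun x => s.getD x 0) q1 q2 q3 d12' d13' d23'
    exact ⟨i, j, l, Pi.1, hij, hjl, Pl.2.1, Pi.2.2.1, Pj.2.2.1, Pl.2.2.1, dji, djl, Pj.2.2.2⟩
  -- main case split on counting
  rcases le_or_gt 3 A.card with hAc | hAc
  · -- at least three distinct low letters occur before Q
    obtain ⟨v1, hv1, v2, hv2, v3, hv3, d12, d13, d23⟩ := ex3 hAc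
    obtain ⟨i, j, l, hij, hjl, hlQ, hi, hj, hl, dji, djl, _⟩ :=
      tripleA v1 v2 v3 hv1 hv2 hv3 d12 d13 d23
    by_cases hend : s.getD (n-1) 0 ≠ s.getD j 0
    · exact T2 i j l (n-1) hij hjl hlQ (by omega) (by omega) hi hj hl hlast dji djl hend
    · push_neg at hend
      rcases le_or_gt 4 A.card with hAc4 | hAc4
      · -- four distinct letters in A: pick three avoiding β := getD (n-1)
        have hcard' : 3 ≤ (A.erase (s.getD (n-1) 0)).card := by
          have := Finset.card_erase_of_mem (a := s.getD (n-1) 0) (s := A)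
          by_cases hmem : s.getD (n-1) 0 ∈ A
          · have := Finset.card_erase_of_mem hmem; omega
          · rw [Finset.erase_eq_of_notMem hmem]; omega
        obtain ⟨w1, hw1, w2, hw2, w3, hw3, e12, e13, e23⟩ := ex3 hcard'
        have hw1A := Finset.mem_of_mem_erase hw1
        have hw2A := Finset.mem_of_mem_erase hw2
        have hw3A := Finset.mem_of_mem_erase hw3
        obtain ⟨i', j', l', hij', hjl', hlQ', hi', hj', hl', dji', djl', hjmem⟩ :=
          tripleA w1 w2 w3 hw1A hw2A hw3A e12 e13 e23
        have hjne : s.getD (n-1) 0 ≠ s.getD j' 0 := by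
          have g1 := Finset.ne_of_mem_erase hw1
          have g2 := Finset.ne_of_mem_erase hw2
          have g3 := Finset.ne_of_mem_erase hw3
          simp only [Set.mem_insert_iff, Set.mem_singleton_iff] at hjmem
          rcases hjmem with h | h | h <;> rw [h] <;> omega
        exact T2 i' j' l' (n-1) hij' hjl' hlQ' (by omega) (by omega) hi' hj' hl' hlast dji' djl' hjne
      · -- A.card = 3, so B has at least two distinct letters
        have hBc : 2 ≤ B.card := by omega
        obtain ⟨w1, hw1, w2, hw2, e12⟩ := Finset.one_lt_card.mp (show 1 < B.card by omega)
        obtain ⟨_, _, m1, hm1, hm1n, f1⟩ := hBlow w1 hw1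
        obtain ⟨_, _, m2, hm2, hm2n, f2⟩ := hBlow w2 hw2
        by_cases hne1 : s.getD m1 0 ≠ s.getD j 0
        · exact T2 i j l m1 hij hjl hlQ hm1 hm1n hi hj hl (by rw [f1]; exact (hBlow w1 hw1).2.1) dji djl hne1
        · push_neg at hne1
          have hne2 : s.getD m2 0 ≠ s.getD j 0 := by
            rw [f1] at hne1; rw [f2]; rw [← hne1]; exact fun h => e12 h.symm
          exact T2 i j l m2 hij hjl hlQ hm2 hm2n hi hj hl (by rw [f2]; exact (hBlow w2 hw2).2.1) dji djl hne2
  · -- at least three distinct low letters occur after Q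
    have hBc : 3 ≤ B.card := by omega
    obtain ⟨v1, hv1, v2, hv2, v3, hv3, d12, d13, d23⟩ := ex3 hBc
    obtain ⟨i, j, l, hQi, hij, hjl, hln, hi, hj, hl, dji, djl, _⟩ :=
      tripleB v1 v2 v3 hv1 hv2 hv3 d12 d13 d23
    by_cases hend : s.getD 0 0 ≠ s.getD j 0
    · exact T3 0 i j l hQ0 hQi hij hjl hln h0 hi hj hl dji djl hend
    · push_neg at hend
      rcases le_or_gt 4 B.card with hBc4 | hBc4
      · have hcard' : 3 ≤ (B.erase (s.getD 0 0)).card := by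
          by_cases hmem : s.getD 0 0 ∈ B
          · have := Finset.card_erase_of_mem hmem; omega
          · rw [Finset.erase_eq_of_notMem hmem]; omega
        obtain ⟨w1, hw1, w2, hw2, w3, hw3, e12, e13, e23⟩ := ex3 hcard'
        obtain ⟨i', j', l', hQi', hij', hjl', hln', hi', hj', hl', dji', djl', hjmem⟩ :=
          tripleB w1 w2 w3 (Finset.mem_of_mem_erase hw1) (Finset.mem_of_mem_erase hw2)
            (Finset.mem_of_mem_erase hw3) e12 e13 e23
        have hjne : s.getD 0 0 ≠ s.getD j' 0 := by
          have g1 := Finset.ne_of_mem_erase hw1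
          have g2 := Finset.ne_of_mem_erase hw2
          have g3 := Finset.ne_of_mem_erase hw3
          simp only [Set.mem_insert_iff, Set.mem_singleton_iff] at hjmem
          rcases hjmem with h | h | h <;> rw [h] <;> omega
        exact T3 0 i' j' l' hQ0 hQi' hij' hjl' hln' h0 hi' hj' hl' dji' djl' hjne
      · -- B.card = 3, so A has at least two distinct letters
        have hAc2 : 2 ≤ A.card := by omega
        obtain ⟨w1, hw1, w2, hw2, e12⟩ := Finset.one_lt_card.mp (show 1 < A.card by omega)
        obtain ⟨_, _, m1, hm1, f1⟩ := hAlow w1 hw1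
        obtain ⟨_, _, m2, hm2, f2⟩ := hAlow w2 hw2
        by_cases hne1 : s.getD m1 0 ≠ s.getD j 0
        · exact T3 m1 i j l hm1 hQi hij hjl hln (by rw [f1]; exact (hAlow w1 hw1).2.1) hi hj hl dji djl hne1
        · push_neg at hne1
          have hne2 : s.getD m2 0 ≠ s.getD j 0 := by
            rw [f1] at hne1; rw [f2, ← hne1]; exact fun h => e12 h.symm
          exact T3 m2 i j l hm2 hQi hij hjl hln (by rw [f2]; exact (hAlow w2 hw2).2.1) hi hj hl dji djl hne2


set_option maxHeartbeats 2000000 in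
open Classical in
lemma Ctx.caseB {k u : ℕ} {s : List ℕ} (C : Ctx k u s) (Q : ℕ)
    (hQn : Q < s.length) (hQ : u < s.getD Q 0)
    (h0 : s.getD 0 0 ≤ u) (hlast : u < s.getD (s.length - 1) 0)
    (hr : ∃ r, Q < r ∧ r < s.length ∧ s.getD r 0 ≤ u) : False := by
  set n := s.length with hn
  have hn1 : 1 ≤ n := by omega
  have hQ0 : 0 < Q := by
    have : Q ≠ 0 := by rintro rfl; omega
    omega
  obtain ⟨r, hQr, hrn, hrlow⟩ := hr
  -- L : the greatest low position
  set L := Nat.findGreatest (fun i => i < n ∧ s.getD i 0 ≤ u) n with hLdef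
  have hLspec : L < n ∧ s.getD L 0 ≤ u := by
    exact Nat.findGreatest_spec (P := fun i => i < n ∧ s.getD i 0 ≤ u) (m := r) (n := n)
      (by omega) ⟨hrn, hrlow⟩
  have hLgr : ∀ i, L < i → i < n → u < s.getD i 0 := by
    intro i hLi hin
    by_contra hcon
    exact Nat.findGreatest_is_greatest (P := fun i => i < n ∧ s.getD i 0 ≤ u) (n := n)
      (k := i) hLi (by omega) ⟨hin, by omega⟩
  have hQL : Q < L := by
    rcases Nat.lt_or_ge L r with h | h
    · exfalso
      exact Nat.findGreatest_is_greatest (P := fun i => i < n ∧ s.getD i 0 ≤ u) (n := n)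
        (k := r) h (by omega) ⟨hrn, hrlow⟩
    · omega
  have hLn1 : L < n - 1 := by
    have : L ≠ n - 1 := by intro h; rw [h] at hLspec; omega
    omega
  -- E1 : no three pairwise-distinct-letter high positions before L
  have noHigh3P2 : ∀ a b c, a < L → b < L → c < L → u < s.getD a 0 → u < s.getD b 0 →
      u < s.getD c 0 → s.getD a 0 ≠ s.getD b 0 → s.getD a 0 ≠ s.getD c 0 →
      s.getD b 0 ≠ s.getD c 0 → False := by
    intro a b c han hbn hcn hha hhb hhc dab dac dbc
    obtain ⟨i, j, l, Pi, Pj, Pl, hij, hjl, d1, d2, _⟩ :=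
      sort3 (P := fun x => x < L ∧ u < s.getD x 0) (t := fun x => s.getD x 0)
        ⟨han, hha⟩ ⟨hbn, hhb⟩ ⟨hcn, hhc⟩ dab dac dbc
    have hi0 : 0 < i := by
      have : i ≠ 0 := by intro h; rw [h] at Pi; omega
      omega
    exact C.highTriple hi0 hij hjl Pl.1 (by omega) h0 Pi.2 Pj.2 Pl.2 hLspec.2 d1 d2
  -- E2 : no three pairwise-distinct-letter low positions after Q
  have noLow3P3 : ∀ a b c, Q < a → a < n → Q < b → b < n → Q < c → c < n →
      s.getD a 0 ≤ u → s.getD b 0 ≤ u → s.getD c 0 ≤ u →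
      s.getD a 0 ≠ s.getD b 0 → s.getD a 0 ≠ s.getD c 0 →
      s.getD b 0 ≠ s.getD c 0 → False := by
    intro a b c ha1 ha2 hb1 hb2 hc1 hc2 hla hlb hlc dab dac dbc
    obtain ⟨i, j, l, Pi, Pj, Pl, hij, hjl, d1, d2, _⟩ :=
      sort3 (P := fun x => Q < x ∧ x < n ∧ s.getD x 0 ≤ u) (t := fun x => s.getD x 0)
        ⟨ha1, ha2, hla⟩ ⟨hb1, hb2, hlb⟩ ⟨hc1, hc2, hlc⟩ dab dac dbc
    have hl1 : l < n - 1 := by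
      have : l ≠ n - 1 := by intro h; rw [h] at Pl; omega
      omega
    exact C.lowTriple Pi.1 hij hjl hl1 (by omega) hQ Pi.2.2 Pj.2.2 Pl.2.2 hlast d1 d2
  by_cases hP4 : ∃ g h, L < g ∧ g < h ∧ h < n ∧ s.getD g 0 ≠ s.getD h 0
  · -- the tail after L is not constant
    obtain ⟨g, h, hLg, hgh, hhn, dgh⟩ := hP4
    -- every high letter before L equals the letter at the second element of any distinct pair
    have allP2 : ∀ g' h', L < g' → g' < h' → h' < n → s.getD g' 0 ≠ s.getD h' 0 →
        ∀ f, f < L → u < s.getD f 0 → s.getD f 0 = s.getD h' 0 := by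
      intro g' h' hLg' hg'h' hh'n dg'h' f hfL hfh
      by_contra hne
      have hf0 : 0 < f := by
        have : f ≠ 0 := by intro hx; rw [hx] at hfh; omega
        omega
      exact C.twoHighTail hf0 hfL hLg' hg'h' hh'n h0 hfh hLspec.2
        (hLgr g' hLg' (by omega)) (hLgr h' (by omega) hh'n) dg'h' hne
    -- no three pairwise-distinct-letter positions after L
    have noHigh3P4 : ∀ a b c, L < a → a < n → L < b → b < n → L < c → c < n →
        s.getD a 0 ≠ s.getD b 0 → s.getD a 0 ≠ s.getD c 0 →
        s.getD b 0 ≠ s.getD c 0 → False := by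
      intro a b c ha1 ha2 hb1 hb2 hc1 hc2 dab dac dbc
      obtain ⟨i, j, l, Pi, Pj, Pl, hij, hjl, d1, d2, d3⟩ :=
        sort3 (P := fun x => L < x ∧ x < n) (t := fun x => s.getD x 0)
          ⟨ha1, ha2⟩ ⟨hb1, hb2⟩ ⟨hc1, hc2⟩ dab dac dbc
      have e1 : s.getD Q 0 = s.getD j 0 :=
        allP2 i j Pi.1 hij Pj.2 (fun hx => d1 hx.symm) Q hQL hQ
      have e2 : s.getD Q 0 = s.getD l 0 :=
        allP2 i l Pi.1 (by omega) Pl.2 (fun hx => d3 hx) Q hQL hQ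
      exact d2 (by rw [← e1, ← e2])
    -- every high letter occurs at a position after L
    have key : ∀ v, u < v → v ≤ k → ∃ y, L < y ∧ y < n ∧ s.getD y 0 = v := by
      intro v hv1 hv2
      obtain ⟨x, hxn, hxv⟩ := C.hsurj v (by omega) hv2
      rcases Nat.lt_trichotomy x L with hx | hx | hx
      · have := allP2 g h hLg hgh hhn dgh x hx (by omega)
        exact ⟨h, by omega, hhn, by omega⟩
      · exfalso; rw [hx] at hxv; omega
      · exact ⟨x, hx, hxn, hxv⟩
    have hu5 : 5 ≤ u := by
      by_contra hcon
      have h3 : u + 3 ≤ k := by have := C.hk; omega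
      obtain ⟨y1, hy1, hy1n, e1⟩ := key (u+1) (by omega) (by omega)
      obtain ⟨y2, hy2, hy2n, e2⟩ := key (u+2) (by omega) (by omega)
      obtain ⟨y3, hy3, hy3n, e3⟩ := key (u+3) (by omega) (by omega)
      exact noHigh3P4 y1 y2 y3 hy1 hy1n hy2 hy2n hy3 hy3n
        (by omega) (by omega) (by omega)
    -- now the low-letter endgame, as in case C
    have lowOcc : ∀ v, 1 ≤ v → v ≤ u → ∃ i, i < n ∧ i ≠ Q ∧ s.getD i 0 = v := by
      intro v hv1 hvu
      obtain ⟨i, hin, hiv⟩ := C.hsurj v hv1 (by have := C.hu2; omega)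
      exact ⟨i, hin, by rintro rfl; omega, hiv⟩
    have T2 : ∀ i j l m, i < j → j < l → l < Q → Q < m → m < n →
        s.getD i 0 ≤ u → s.getD j 0 ≤ u → s.getD l 0 ≤ u → s.getD m 0 ≤ u →
        s.getD j 0 ≠ s.getD i 0 → s.getD j 0 ≠ s.getD l 0 →
        s.getD m 0 ≠ s.getD j 0 → False := by
      intro i j l m hij hjl hlQ hQm hmn hi hj hl hm d1 d2 d3
      exact C.lowTriple_lowAfter hij hjl hlQ hQm hmn hi hj hl hQ hm d1 d2 d3
    set OccP1 : ℕ → Prop := fun v => ∃ i, i < Q ∧ s.getD i 0 = v with hOcc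
    set F5 : Finset ℕ := Finset.Icc 1 5 with hF5
    set A : Finset ℕ := F5.filter (fun v => OccP1 v) with hA
    set B : Finset ℕ := F5.filter (fun v => ¬ OccP1 v) with hB
    have hcards : A.card + B.card = 5 := by
      rw [hA, hB, Finset.card_filter_add_card_filter_not]
      simp [hF5]
    have hAlow : ∀ v ∈ A, 1 ≤ v ∧ v ≤ u ∧ OccP1 v := by
      intro v hv
      rw [hA, Finset.mem_filter, hF5, Finset.mem_Icc] at hv
      exact ⟨hv.1.1, by omega, hv.2⟩
    have hBlow : ∀ v ∈ B, 1 ≤ v ∧ v ≤ u ∧ ∃ i, Q < i ∧ i < n ∧ s.getD i 0 = v := by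
      intro v hv
      rw [hB, Finset.mem_filter, hF5, Finset.mem_Icc] at hv
      have hv1 : 1 ≤ v := hv.1.1
      have hvu : v ≤ u := by omega
      obtain ⟨i, hin, hiQ, hiv⟩ := lowOcc v hv1 hvu
      refine ⟨hv1, hvu, i, ?_, hin, hiv⟩
      rcases Nat.lt_trichotomy i Q with hx | hx | hx
      · exact absurd ⟨i, hx, hiv⟩ hv.2
      · exact absurd hx hiQ
      · exact hx
    have tripleA : ∀ v1 v2 v3, v1 ∈ A → v2 ∈ A → v3 ∈ A → v1 ≠ v2 → v1 ≠ v3 → v2 ≠ v3 →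
        ∃ i j l, i < j ∧ j < l ∧ l < Q ∧
          s.getD i 0 ≤ u ∧ s.getD j 0 ≤ u ∧ s.getD l 0 ≤ u ∧
          s.getD j 0 ≠ s.getD i 0 ∧ s.getD j 0 ≠ s.getD l 0 ∧
          s.getD j 0 ∈ ({v1, v2, v3} : Set ℕ) := by
      intro v1 v2 v3 h1 h2 h3 d12 d13 d23
      obtain ⟨hv1a, hv1b, p1, hp1, e1⟩ := hAlow v1 h1
      obtain ⟨hv2a, hv2b, p2, hp2, e2⟩ := hAlow v2 h2
      obtain ⟨hv3a, hv3b, p3, hp3, e3⟩ := hAlow v3 h3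
      have q1 : p1 < Q ∧ s.getD p1 0 ≤ u ∧ s.getD p1 0 ∈ ({v1, v2, v3} : Set ℕ) := by
        refine ⟨hp1, ?_, ?_⟩ <;> rw [e1]
        · exact hv1b
        · simp
      have q2 : p2 < Q ∧ s.getD p2 0 ≤ u ∧ s.getD p2 0 ∈ ({v1, v2, v3} : Set ℕ) := by
        refine ⟨hp2, ?_, ?_⟩ <;> rw [e2]
        · exact hv2b
        · simp
      have q3 : p3 < Q ∧ s.getD p3 0 ≤ u ∧ s.getD p3 0 ∈ ({v1, v2, v3} : Set ℕ) := by
        refine ⟨hp3, ?_, ?_⟩ <;> rw [e3]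
        · exact hv3b
        · simp
      have d12' : s.getD p1 0 ≠ s.getD p2 0 := by rw [e1, e2]; exact d12
      have d13' : s.getD p1 0 ≠ s.getD p3 0 := by rw [e1, e3]; exact d13
      have d23' : s.getD p2 0 ≠ s.getD p3 0 := by rw [e2, e3]; exact d23
      obtain ⟨i, j, l, Pi, Pj, Pl, hij, hjl, dji, djl, _⟩ :=
        sort3 (P := fun x => x < Q ∧ s.getD x 0 ≤ u ∧ s.getD x 0 ∈ ({v1, v2, v3} : Set ℕ))
          (t := fun x => s.getD x 0) q1 q2 q3 d12' d13' d23'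
      exact ⟨i, j, l, hij, hjl, Pl.1, Pi.2.1, Pj.2.1, Pl.2.1, dji, djl, Pj.2.2⟩
    rcases le_or_gt 3 A.card with hAc | hAc
    · obtain ⟨v1, hv1, v2, hv2, v3, hv3, d12, d13, d23⟩ := ex3 hAc
      obtain ⟨i, j, l, hij, hjl, hlQ, hi, hj, hl, dji, djl, _⟩ :=
        tripleA v1 v2 v3 hv1 hv2 hv3 d12 d13 d23
      by_cases hend : s.getD L 0 ≠ s.getD j 0
      · exact T2 i j l L hij hjl hlQ hQL (by omega) hi hj hl hLspec.2 dji djl hend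
      · push_neg at hend
        rcases le_or_gt 4 A.card with hAc4 | hAc4
        · have hcard' : 3 ≤ (A.erase (s.getD L 0)).card := by
            by_cases hmem : s.getD L 0 ∈ A
            · have := Finset.card_erase_of_mem hmem; omega
            · rw [Finset.erase_eq_of_notMem hmem]; omega
          obtain ⟨w1, hw1, w2, hw2, w3, hw3, e12, e13, e23⟩ := ex3 hcard'
          obtain ⟨i', j', l', hij', hjl', hlQ', hi', hj', hl', dji', djl', hjmem⟩ :=
            tripleA w1 w2 w3 (Finset.mem_of_mem_erase hw1) (Finset.mem_of_mem_erase hw2)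
              (Finset.mem_of_mem_erase hw3) e12 e13 e23
          have hjne : s.getD L 0 ≠ s.getD j' 0 := by
            have g1 := Finset.ne_of_mem_erase hw1
            have g2 := Finset.ne_of_mem_erase hw2
            have g3 := Finset.ne_of_mem_erase hw3
            simp only [Set.mem_insert_iff, Set.mem_singleton_iff] at hjmem
            rcases hjmem with hx | hx | hx <;> rw [hx] <;> omega
          exact T2 i' j' l' L hij' hjl' hlQ' hQL (by omega) hi' hj' hl' hLspec.2 dji' djl' hjne
        · have hBc : 2 ≤ B.card := by omega
          obtain ⟨w1, hw1, w2, hw2, e12⟩ := Finset.one_lt_card.mp (show 1 < B.card by omega)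
          obtain ⟨_, _, m1, hm1, hm1n, f1⟩ := hBlow w1 hw1
          obtain ⟨_, _, m2, hm2, hm2n, f2⟩ := hBlow w2 hw2
          by_cases hne1 : s.getD m1 0 ≠ s.getD j 0
          · exact T2 i j l m1 hij hjl hlQ hm1 hm1n hi hj hl (by rw [f1]; exact (hBlow w1 hw1).2.1) dji djl hne1
          · push_neg at hne1
            have hne2 : s.getD m2 0 ≠ s.getD j 0 := by
              rw [f1] at hne1; rw [f2, ← hne1]; exact fun hx => e12 hx.symm
            exact T2 i j l m2 hij hjl hlQ hm2 hm2n hi hj hl (by rw [f2]; exact (hBlow w2 hw2).2.1) dji djl hne2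
    · -- at least three distinct low letters occur after Q : contradict noLow3P3
      have hBc : 3 ≤ B.card := by omega
      obtain ⟨v1, hv1, v2, hv2, v3, hv3, d12, d13, d23⟩ := ex3 hBc
      obtain ⟨_, _, m1, hm1, hm1n, f1⟩ := hBlow v1 hv1
      obtain ⟨_, _, m2, hm2, hm2n, f2⟩ := hBlow v2 hv2
      obtain ⟨_, _, m3, hm3, hm3n, f3⟩ := hBlow v3 hv3
      exact noLow3P3 m1 m2 m3 hm1 hm1n hm2 hm2n hm3 hm3n
        (by rw [f1]; exact (hBlow v1 hv1).2.1)
        (by rw [f2]; exact (hBlow v2 hv2).2.1)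
        (by rw [f3]; exact (hBlow v3 hv3).2.1)
        (by rw [f1, f2]; exact d12) (by rw [f1, f3]; exact d13) (by rw [f2, f3]; exact d23)
  · -- the tail after L is constant
    push_neg at hP4
    have htail : ∀ x, L < x → x < n → s.getD x 0 = s.getD (n-1) 0 := by
      intro x hLx hxn
      rcases Nat.lt_trichotomy x (n-1) with hx | hx | hx
      · exact hP4 x (n-1) hLx hx (by omega)
      · rw [hx]
      · omega
    -- bound on high letters : at most two distinct high letters occur before L, all others impossible
    have khigh : k ≤ u + 3 := by
      by_contra hcon
      have h4 : u + 4 ≤ k := by omega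
      -- letters u+1..u+4 occur at high positions; at most one equals the tail letter
      have key : ∀ v, u < v → v ≤ k → v ≠ s.getD (n-1) 0 → ∃ y, y < L ∧ s.getD y 0 = v := by
        intro v hv1 hv2 hv3
        obtain ⟨x, hxn, hxv⟩ := C.hsurj v (by omega) hv2
        rcases Nat.lt_trichotomy x L with hx | hx | hx
        · exact ⟨x, hx, hxv⟩
        · exfalso; rw [hx] at hxv; omega
        · exact absurd (by rw [← hxv]; exact htail x hx hxn) hv3
      have hcard' : 3 ≤ ((Finset.Icc (u+1) (u+4)).erase (s.getD (n-1) 0)).card := by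
        by_cases hmem : s.getD (n-1) 0 ∈ Finset.Icc (u+1) (u+4)
        · have := Finset.card_erase_of_mem hmem
          rw [Nat.card_Icc] at this; omega
        · rw [Finset.erase_eq_of_notMem hmem, Nat.card_Icc]; omega
      obtain ⟨w1, hw1, w2, hw2, w3, hw3, e12, e13, e23⟩ := ex3 hcard'
      have hmem1 := Finset.mem_of_mem_erase hw1
      have hmem2 := Finset.mem_of_mem_erase hw2
      have hmem3 := Finset.mem_of_mem_erase hw3
      rw [Finset.mem_Icc] at hmem1 hmem2 hmem3
      obtain ⟨y1, hy1, f1⟩ := key w1 (by omega) (by omega) (Finset.ne_of_mem_erase hw1)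
      obtain ⟨y2, hy2, f2⟩ := key w2 (by omega) (by omega) (Finset.ne_of_mem_erase hw2)
      obtain ⟨y3, hy3, f3⟩ := key w3 (by omega) (by omega) (Finset.ne_of_mem_erase hw3)
      exact noHigh3P2 y1 y2 y3 hy1 hy2 hy3 (by omega) (by omega) (by omega)
        (by rw [f1, f2]; exact e12) (by rw [f1, f3]; exact e13) (by rw [f2, f3]; exact e23)
    have hu4 : 4 ≤ u := by have := C.hk; omega
    -- now analyse low positions before Q
    by_cases hP1 : ∃ a b, a < b ∧ b < Q ∧ s.getD a 0 ≤ u ∧ s.getD b 0 ≤ u ∧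
        s.getD a 0 ≠ s.getD b 0
    · -- two distinct low letters before Q
      have allEq : ∀ a b, a < b → b < Q → s.getD a 0 ≤ u → s.getD b 0 ≤ u →
          s.getD a 0 ≠ s.getD b 0 → s.getD L 0 = s.getD a 0 := by
        intro a b hab hbQ hla hlb dab
        by_cases hm : ∃ m, Q < m ∧ m < n ∧ s.getD m 0 ≤ u ∧ s.getD m 0 ≠ s.getD a 0
        · obtain ⟨m, hm1, hm2, hm3, hm4⟩ := hm
          exfalso
          have hmn1 : m < n - 1 := by
            have : m ≠ n - 1 := by intro hx; rw [hx] at hm3; omega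
            omega
          exact C.twoLowHead hab hbQ hm1 hmn1 (by omega) hla hlb hQ hm3 hlast dab hm4
        · push_neg at hm
          exact hm L hQL (by omega) hLspec.2
      have noLow3P1 : ∀ a b c, a < Q → b < Q → c < Q →
          s.getD a 0 ≤ u → s.getD b 0 ≤ u → s.getD c 0 ≤ u →
          s.getD a 0 ≠ s.getD b 0 → s.getD a 0 ≠ s.getD c 0 →
          s.getD b 0 ≠ s.getD c 0 → False := by
        intro a b c ha hb hc hla hlb hlc dab dac dbc
        obtain ⟨i, j, l, Pi, Pj, Pl, hij, hjl, d1, d2, d3⟩ :=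
          sort3 (P := fun x => x < Q ∧ s.getD x 0 ≤ u) (t := fun x => s.getD x 0)
            ⟨ha, hla⟩ ⟨hb, hlb⟩ ⟨hc, hlc⟩ dab dac dbc
        have e1 := allEq i j hij Pj.1 Pi.2 Pj.2 (fun hx => d1 hx.symm)
        have e2 := allEq j l hjl Pl.1 Pj.2 Pl.2 d2
        exact d1 (by rw [← e1, ← e2])
      -- bound low letters : letters 1..4, at most one equals s.getD L 0 among those after Q
      obtain ⟨a0, b0, hab0, hbQ0, hla0, hlb0, dab0⟩ := hP1
      have hLa : s.getD L 0 = s.getD a0 0 := allEq a0 b0 hab0 hbQ0 hla0 hlb0 dab0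
      have hallm : ∀ m, Q < m → m < n → s.getD m 0 ≤ u → s.getD m 0 = s.getD a0 0 := by
        intro m hm1 hm2 hm3
        by_contra hne
        have hmn1 : m < n - 1 := by
          have : m ≠ n - 1 := by intro hx; rw [hx] at hm3; omega
          omega
        exact C.twoLowHead hab0 hbQ0 hm1 hmn1 (by omega) hla0 hlb0 hQ hm3 hlast dab0 hne
      -- letters 1..4 distinct, at most one = s.getD a0 0, others occur before Q
      have hcard' : 3 ≤ ((Finset.Icc 1 4).erase (s.getD a0 0)).card := by
        by_cases hmem : s.getD a0 0 ∈ Finset.Icc 1 4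
        · have := Finset.card_erase_of_mem hmem
          rw [Nat.card_Icc] at this; omega
        · rw [Finset.erase_eq_of_notMem hmem, Nat.card_Icc]; omega
      obtain ⟨w1, hw1, w2, hw2, w3, hw3, e12, e13, e23⟩ := ex3 hcard'
      have keylow : ∀ w, w ∈ (Finset.Icc 1 4).erase (s.getD a0 0) →
          ∃ y, y < Q ∧ s.getD y 0 = w ∧ s.getD y 0 ≤ u := by
        intro w hw
        have hwne := Finset.ne_of_mem_erase hw
        have hwm := Finset.mem_of_mem_erase hw
        rw [Finset.mem_Icc] at hwm
        obtain ⟨x, hxn, hxv⟩ := C.hsurj w (by omega) (by have := C.hk; omega)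
        have hxQ : x ≠ Q := by intro hx; rw [hx] at hxv; omega
        rcases Nat.lt_trichotomy x Q with hx | hx | hx
        · exact ⟨x, hx, hxv, by omega⟩
        · exact absurd hx hxQ
        · exfalso
          exact hwne (by rw [← hxv]; exact hallm x hx hxn (by omega))
      obtain ⟨y1, hy1, f1, g1⟩ := keylow w1 hw1
      obtain ⟨y2, hy2, f2, g2⟩ := keylow w2 hw2
      obtain ⟨y3, hy3, f3, g3⟩ := keylow w3 hw3
      exact noLow3P1 y1 y2 y3 hy1 hy2 hy3 g1 g2 g3
        (by rw [f1, f2]; exact e12) (by rw [f1, f3]; exact e13) (by rw [f2, f3]; exact e23)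
    · -- all low letters before Q are equal (to s.getD 0 0)
      push_neg at hP1
      have hconst : ∀ a, a < Q → s.getD a 0 ≤ u → s.getD a 0 = s.getD 0 0 := by
        intro a ha hla
        rcases Nat.eq_zero_or_pos a with h | h
        · rw [h]
        · by_contra hne
          exact hne (hP1 0 a h ha h0 hla ▸ rfl)
      have hcard' : 3 ≤ ((Finset.Icc 1 4).erase (s.getD 0 0)).card := by
        by_cases hmem : s.getD 0 0 ∈ Finset.Icc 1 4
        · have := Finset.card_erase_of_mem hmem
          rw [Nat.card_Icc] at this; omega
        · rw [Finset.erase_eq_of_notMem hmem, Nat.card_Icc]; omega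
      obtain ⟨w1, hw1, w2, hw2, w3, hw3, e12, e13, e23⟩ := ex3 hcard'
      have keylow : ∀ w, w ∈ (Finset.Icc 1 4).erase (s.getD 0 0) →
          ∃ y, Q < y ∧ y < n ∧ s.getD y 0 = w ∧ s.getD y 0 ≤ u := by
        intro w hw
        have hwne := Finset.ne_of_mem_erase hw
        have hwm := Finset.mem_of_mem_erase hw
        rw [Finset.mem_Icc] at hwm
        obtain ⟨x, hxn, hxv⟩ := C.hsurj w (by omega) (by have := C.hk; omega)
        have hxQ : x ≠ Q := by intro hx; rw [hx] at hxv; omega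
        rcases Nat.lt_trichotomy x Q with hx | hx | hx
        · exfalso
          exact hwne (by rw [← hxv]; exact hconst x hx (by omega))
        · exact absurd hx hxQ
        · exact ⟨x, hx, hxn, hxv, by omega⟩
      obtain ⟨y1, hy1, hy1n, f1, g1⟩ := keylow w1 hw1
      obtain ⟨y2, hy2, hy2n, f2, g2⟩ := keylow w2 hw2
      obtain ⟨y3, hy3, hy3n, f3, g3⟩ := keylow w3 hw3
      exact noLow3P3 y1 y2 y3 hy1 hy1n hy2 hy2n hy3 hy3n g1 g2 g3
        (by rw [f1, f2]; exact e12) (by rw [f1, f3]; exact e13) (by rw [f2, f3]; exact e23)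


/-- Transfer the context along list reversal. -/
lemma Ctx.rev {k u : ℕ} {s : List ℕ} (C : Ctx k u s) : Ctx k u s.reverse := by
  have hlen : s.reverse.length = s.length := List.length_reverse
  have hget : ∀ i, i < s.length → s.reverse.getD i 0 = s.getD (s.length - 1 - i) 0 := by
    intro i hi
    rw [List.getD_eq_getElem s.reverse 0 (n := i) (by omega), List.getD_eq_getElem s 0 (n := s.length - 1 - i) (by omega)]
    exact List.getElem_reverse (by omega)
  refine ⟨C.hk, C.hu1, C.hu2, ?_, ?_, ?_⟩
  · intro i hi
    rw [hlen] at hi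
    rw [hget i hi]
    exact C.hrange _ (by omega)
  · intro v hv1 hv2
    obtain ⟨i, hin, hiv⟩ := C.hsurj v hv1 hv2
    refine ⟨s.length - 1 - i, by omega, ?_⟩
    rw [hget _ (by omega)]
    have : s.length - 1 - (s.length - 1 - i) = i := by omega
    rw [this]; exact hiv
  · intro S T hS hT hd hAlt
    obtain ⟨x1, y1, x2, y2, x3, hsub, m1, m2, m3, m4, m5⟩ := hAlt
    refine C.hfree S T hS hT hd ⟨x3, y2, x2, y1, x1, ?_, m3, m2, m1, m5, m4⟩
    have := hsub.reverse
    rw [List.reverse_reverse] at this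
    simpa using this

/-- The main contradiction, from a low-high-low witness. -/
lemma Ctx.main {k u : ℕ} {s : List ℕ} (C : Ctx k u s) (p q r : ℕ)
    (hpq : p < q) (hqr : q < r) (hrn : r < s.length)
    (hp : s.getD p 0 ≤ u) (hq : u < s.getD q 0) (hr : s.getD r 0 ≤ u) : False := by
  set n := s.length with hn
  have hp0 : 0 ≤ p := Nat.zero_le p
  rcases le_or_gt (s.getD 0 0) u with h0 | h0
  · rcases le_or_gt (s.getD (n-1) 0) u with hl | hl
    · exact C.caseC q (by omega) hq h0 hl
    · exact C.caseB q (by omega) hq h0 hl ⟨r, hqr, hrn, hr⟩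
  · rcases le_or_gt (s.getD (n-1) 0) u with hl | hl
    · -- first high, last low : reverse and use case B
      have C' := C.rev
      have hlen : s.reverse.length = n := List.length_reverse
      have hget : ∀ i, i < n → s.reverse.getD i 0 = s.getD (n - 1 - i) 0 := by
        intro i hi
        rw [List.getD_eq_getElem s.reverse 0 (n := i) (by omega),
          List.getD_eq_getElem s 0 (n := n - 1 - i) (by omega)]
        exact List.getElem_reverse (by omega)
      refine C'.caseB (n - 1 - q) (by omega) ?_ ?_ ?_ ⟨n - 1 - p, by omega, by omega, ?_⟩
      · rw [hget _ (by omega)]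
        have : n - 1 - (n - 1 - q) = q := by omega
        rw [this]; exact hq
      · rw [hget _ (by omega)]
        have : n - 1 - 0 = n - 1 := by omega
        rw [this]; exact hl
      · rw [hlen, hget _ (by omega)]
        have : n - 1 - (n - 1) = 0 := by omega
        rw [this]; exact h0
      · rw [hget _ (by omega)]
        have : n - 1 - (n - 1 - p) = p := by omega
        rw [this]; exact hp
    · -- both ends high : immediate alternating pattern
      have hq0 : 0 < p ∨ 0 = p := by omega
      have hpne : 0 < p := by
        have : p ≠ 0 := by intro hx; rw [hx] at hp; omega
        omega
      have hrne : r < n - 1 := by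
        have : r ≠ n - 1 := by intro hx; rw [hx] at hr; omega
        omega
      have hu2 := C.hu2
      have hr0 := C.hrange 0 (by omega)
      have hrp := C.hrange p (by omega)
      have hrq := C.hrange q (by omega)
      have hrr := C.hrange r (by omega)
      have hrl := C.hrange (n-1) (by omega)
      exact C.hit (S := Set.Icc (u+1) k ∪ Set.Icc (u+1) k)
        (T := Set.Icc 1 u ∪ Set.Icc 1 u)
        ⟨u+1, k, u+1, k, by omega, by omega, le_refl k, le_refl k, rfl⟩
        ⟨1, u, 1, u, le_refl 1, le_refl 1, by omega, by omega, rfl⟩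
        (by rw [Set.disjoint_left]; intro a ha ha'
            simp only [Set.mem_union, Set.mem_Icc] at ha ha'; omega)
        hpne hpq hqr hrne (by omega)
        (by simp only [Set.mem_union, Set.mem_Icc]; omega)
        (by simp only [Set.mem_union, Set.mem_Icc]; omega)
        (by simp only [Set.mem_union, Set.mem_Icc]; omega)
        (by simp only [Set.mem_union, Set.mem_Icc]; omega)
        (by simp only [Set.mem_union, Set.mem_Icc]; omega)


/-- Flip transfer: from a high-low-high witness, reduce to low-high-low in the flipped list. -/
lemma Ctx.mainHLH {k u : ℕ} {s : List ℕ} (C : Ctx k u s) (p q r : ℕ)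
    (hpq : p < q) (hqr : q < r) (hrn : r < s.length)
    (hp : u < s.getD p 0) (hq : s.getD q 0 ≤ u) (hr : u < s.getD r 0) : False := by
  have hk := C.hk
  have hu1 := C.hu1
  have hu2 := C.hu2
  set s' := s.map (fun x => k + 1 - x) with hs'
  have hlen : s'.length = s.length := List.length_map _
  have hget : ∀ i, i < s.length → s'.getD i 0 = k + 1 - s.getD i 0 := by
    intro i hi
    rw [List.getD_eq_getElem s' 0 (n := i) (by omega),
      List.getD_eq_getElem s 0 (n := i) (by omega)]
    simp [hs']
  have helem : ∀ x ∈ s, 1 ≤ x ∧ x ≤ k := by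
    intro x hx
    obtain ⟨i, hi, hix⟩ := List.mem_iff_getElem.mp hx
    have := C.hrange i hi
    rw [List.getD_eq_getElem s 0 (n := i) hi, hix] at this
    exact this
  have C' : Ctx k (k - u) s' := by
    refine ⟨hk, by omega, by omega, ?_, ?_, ?_⟩
    · intro i hi
      rw [hlen] at hi
      have := C.hrange i hi
      rw [hget i hi]; omega
    · intro v hv1 hv2
      obtain ⟨i, hin, hiv⟩ := C.hsurj (k + 1 - v) (by omega) (by omega)
      refine ⟨i, by omega, ?_⟩
      rw [hget i hin, hiv]; omega
    · intro S' T' hS' hT' hd' hAlt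
      obtain ⟨a, b, c, d, ha1, hc1, hb1, hd1, rfl⟩ := hS'
      obtain ⟨e, f, g, h', he1, hg1, hf1, hh1, rfl⟩ := hT'
      obtain ⟨x1, y1, x2, y2, x3, hsub, m1, m2, m3, m4, m5⟩ := hAlt
      obtain ⟨l', hsubl, heq⟩ := List.sublist_map_iff.mp hsub
      match l', heq with
      | [a1, b1, a2, b2, a3], heq =>
        simp only [List.map_cons, List.map_nil, List.cons.injEq, and_true] at heq
        obtain ⟨ex1, ey1, ex2, ey2, ex3⟩ := heq
        have ra1 := helem a1 (hsubl.subset (by simp))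
        have rb1 := helem b1 (hsubl.subset (by simp))
        have ra2 := helem a2 (hsubl.subset (by simp))
        have rb2 := helem b2 (hsubl.subset (by simp))
        have ra3 := helem a3 (hsubl.subset (by simp))
        refine C.hfree (Set.Icc (k+1-b) (k+1-a) ∪ Set.Icc (k+1-d) (k+1-c))
          (Set.Icc (k+1-f) (k+1-e) ∪ Set.Icc (k+1-h') (k+1-g))
          ⟨k+1-b, k+1-a, k+1-d, k+1-c, by omega, by omega, by omega, by omega, rfl⟩
          ⟨k+1-f, k+1-e, k+1-h', k+1-g, by omega, by omega, by omega, by omega, rfl⟩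
          ?_ ⟨a1, b1, a2, b2, a3, hsubl, ?_, ?_, ?_, ?_, ?_⟩
        · rw [Set.disjoint_left]
          intro z hzS hzT
          simp only [Set.mem_union, Set.mem_Icc] at hzS hzT
          have hz1 : 1 ≤ z := by omega
          have hzk : z ≤ k := by omega
          have hzS' : k + 1 - z ∈ Set.Icc a b ∪ Set.Icc c d := by
            simp only [Set.mem_union, Set.mem_Icc]; omega
          have hzT' : k + 1 - z ∈ Set.Icc e f ∪ Set.Icc g h' := by
            simp only [Set.mem_union, Set.mem_Icc]; omega
          exact Set.disjoint_left.mp hd' hzS' hzT'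
        · rw [ex1] at m1
          simp only [Set.mem_union, Set.mem_Icc] at m1 ⊢; omega
        · rw [ex2] at m2
          simp only [Set.mem_union, Set.mem_Icc] at m2 ⊢; omega
        · rw [ex3] at m3
          simp only [Set.mem_union, Set.mem_Icc] at m3 ⊢; omega
        · rw [ey1] at m4
          simp only [Set.mem_union, Set.mem_Icc] at m4 ⊢; omega
        · rw [ey2] at m5
          simp only [Set.mem_union, Set.mem_Icc] at m5 ⊢; omega
  have hrp := C.hrange p (by omega)
  have hrq := C.hrange q (by omega)
  have hrr := C.hrange r (by omega)
  refine C'.main p q r hpq hqr (by omega) ?_ ?_ ?_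
  · rw [hget p (by omega)]; omega
  · rw [hget q (by omega)]; omega
  · rw [hget r (by omega)]; omega

/-- The core combinatorial theorem. -/
theorem core {k : ℕ} {s : List ℕ} (hk : 7 ≤ k)
    (hrange : ∀ i, i < s.length → 1 ≤ s.getD i 0 ∧ s.getD i 0 ≤ k)
    (hsurj : ∀ v, 1 ≤ v → v ≤ k → ∃ i, i < s.length ∧ s.getD i 0 = v)
    (hfree : ∀ S T : Set ℕ, Good k S → Good k T → Disjoint S T → ¬ Alt5 S T s) :
    s.Pairwise (· ≤ ·) ∨ s.Pairwise (fun a b => b ≤ a) := by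
  by_contra hcon
  push_neg at hcon
  obtain ⟨h1, h2⟩ := hcon
  rw [List.pairwise_iff_getElem] at h1 h2
  push_neg at h1 h2
  obtain ⟨p1, q1, hp1, hq1, hpq1, hlt1⟩ := h1
  obtain ⟨p2, q2, hp2, hq2, hpq2, hlt2⟩ := h2
  rw [← List.getD_eq_getElem s 0 hp1, ← List.getD_eq_getElem s 0 hq1] at hlt1
  rw [← List.getD_eq_getElem s 0 hp2, ← List.getD_eq_getElem s 0 hq2] at hlt2
  -- hlt1 : descent, hlt2 : ascent
  have key : ∀ u, 1 ≤ u → u < k → ∀ p q r, p < q → q < r → r < s.length →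
      ((s.getD p 0 ≤ u ∧ u < s.getD q 0 ∧ s.getD r 0 ≤ u) ∨
        (u < s.getD p 0 ∧ s.getD q 0 ≤ u ∧ u < s.getD r 0)) → False := by
    intro u hu1 hu2 p q r hpq hqr hrn hcase
    have C : Ctx k u s := ⟨hk, hu1, hu2, hrange, hsurj, hfree⟩
    rcases hcase with ⟨a, b, c⟩ | ⟨a, b, c⟩
    · exact C.main p q r hpq hqr hrn a b c
    · exact C.mainHLH p q r hpq hqr hrn a b c
  have hr1p := hrange p1 hp1
  have hr1q := hrange q1 hq1
  have hr2p := hrange p2 hp2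
  have hr2q := hrange q2 hq2
  set u1 := s.getD q1 0 with hu1def
  set u2 := s.getD p2 0 with hu2def
  by_cases hLH : ∃ c d, c < d ∧ d < s.length ∧ s.getD c 0 ≤ u1 ∧ u1 < s.getD d 0
  · obtain ⟨c, d, hcd, hdn, hcl, hdh⟩ := hLH
    rcases Nat.lt_trichotomy c p1 with h | h | h
    · exact key u1 (by omega) (by omega) c p1 q1 h hpq1 hq1
        (Or.inl ⟨hcl, by omega, by omega⟩)
    · exfalso; rw [h] at hcl; omega
    · exact key u1 (by omega) (by omega) p1 c d h hcd hdn
        (Or.inr ⟨by omega, hcl, hdh⟩)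
  · push_neg at hLH
    by_cases hHL : ∃ c d, c < d ∧ d < s.length ∧ u2 < s.getD c 0 ∧ s.getD d 0 ≤ u2
    · obtain ⟨c, d, hcd, hdn, hch, hdl⟩ := hHL
      rcases Nat.lt_trichotomy p2 c with h | h | h
      · exact key u2 (by omega) (by omega) p2 c d h hcd hdn
          (Or.inl ⟨by omega, hch, hdl⟩)
      · exfalso; rw [← h] at hch; omega
      · exact key u2 (by omega) (by omega) c p2 q2 h hpq2 hq2
          (Or.inr ⟨hch, by omega, by omega⟩)
    · push_neg at hHL
      obtain ⟨z1, hz1, e1⟩ := hsurj 1 (le_refl 1) (by omega)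
      obtain ⟨zk, hzk, ek⟩ := hsurj k (by omega) (le_refl k)
      rcases Nat.lt_trichotomy z1 zk with h | h | h
      · have := hLH z1 zk h hzk (by omega)
        omega
      · rw [h, ek] at e1; omega
      · have := hHL zk z1 h hz1 (by omega)
        omega


/-- Totality of precedence in a list. -/
lemma prec_total {α : Type*} (l : List α) (v w : α) (hv : v ∈ l) (hw : w ∈ l)
    (hne : v ≠ w) : [v, w].Sublist l ∨ [w, v].Sublist l := by
  induction l with
  | nil => simp at hv
  | cons x t ih =>
    rcases eq_or_ne x v with rfl | hxv
    · left
      have hw' : w ∈ t := by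
        rcases List.mem_cons.mp hw with h | h
        · exact absurd h.symm hne
        · exact h
      exact List.cons_sublist_cons.mpr (List.singleton_sublist.mpr hw')
    · rcases eq_or_ne x w with rfl | hxw
      · right
        have hv' : v ∈ t := by
          rcases List.mem_cons.mp hv with h | h
          · exact absurd h (fun hh => hxv hh.symm)
          · exact h
        exact List.cons_sublist_cons.mpr (List.singleton_sublist.mpr hv')
      · have hv' : v ∈ t := by
          rcases List.mem_cons.mp hv with h | h
          · exact absurd h (fun hh => hxv hh.symm)
          · exact h
        have hw' : w ∈ t := by
          rcases List.mem_cons.mp hw with h | h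
          · exact absurd h (fun hh => hxw hh.symm)
          · exact h
        rcases ih hv' hw' with h | h
        · exact Or.inl (h.cons x)
        · exact Or.inr (h.cons x)

end TwoIntervalAux


open TwoIntervalAux in
/-- **Corollary (two-interval blocks).** Let `k ≥ 7`, let `V` be partitioned
into disjoint nonempty sets `A 1, …, A k`, and let `E` consist of all sets
`(⋃_{i ∈ α} A i) ∪ (⋃_{j ∈ β} A j)` over intervals `α, β` of `{1, …, k}`.
Then an ordering `π` of `V` is an `ABABA`-free ordering of the hypergraph
`(V, E)` if and only if `π` has structure `A 1, A 2, …, A k` or structure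
`A k, A (k-1), …, A 1`. -/
theorem two_interval_blocks_ABABA_free_iff {V : Type*} [Fintype V] (k : ℕ)
    (hk : 7 ≤ k) (A : ℕ → Set V)
    (hdisj : ∀ i ∈ Set.Icc 1 k, ∀ j ∈ Set.Icc 1 k, i ≠ j → Disjoint (A i) (A j))
    (hne : ∀ i ∈ Set.Icc 1 k, (A i).Nonempty)
    (hcover : ⋃ i ∈ Set.Icc 1 k, A i = Set.univ)
    (π : List V) (hπ : IsOrderingOf Set.univ π) :
    FreeOrdering 5
        {S | ∃ α β : Set ℕ, IsNatInterval k α ∧ IsNatInterval k β ∧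
          S = (⋃ i ∈ α, A i) ∪ (⋃ j ∈ β, A j)} π ↔
      HasStructure k A π ∨ HasStructure k (fun i => A (k + 1 - i)) π := by
    classical
  have hmemπ : ∀ v : V, v ∈ π := fun v => (hπ.2 v).mpr trivial
  -- the block function
  have hex : ∀ v : V, ∃ i, i ∈ Set.Icc 1 k ∧ v ∈ A i := by
    intro v
    have hv : v ∈ ⋃ i ∈ Set.Icc 1 k, A i := by rw [hcover]; trivial
    simpa using hv
  choose bf hbmem hbA using hex
  have hbr : ∀ v, 1 ≤ bf v ∧ bf v ≤ k := by
    intro v; have := hbmem v; rw [Set.mem_Icc] at this; exact this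
  have buniq : ∀ v i, i ∈ Set.Icc 1 k → v ∈ A i → i = bf v := by
    intro v i hi hvi
    by_contra hne'
    exact Set.disjoint_left.mp (hdisj i hi (bf v) (hbmem v) hne') hvi (hbA v)
  set s : List ℕ := π.map bf with hs
  have hslen : s.length = π.length := List.length_map bf
  have hsget : ∀ i (h : i < π.length), s.getD i 0 = bf (π[i]) := by
    intro i h
    rw [List.getD_eq_getElem s 0 (n := i) (by omega)]
    simp [hs]
  -- membership in an edge determined by the block function
  have mem_edge : ∀ (α : Set ℕ), α ⊆ Set.Icc 1 k → ∀ v : V,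
      (v ∈ ⋃ i ∈ α, A i ↔ bf v ∈ α) := by
    intro α hα v
    constructor
    · rintro hv
      simp only [Set.mem_iUnion] at hv
      obtain ⟨i, hiα, hvi⟩ := hv
      rw [← buniq v i (hα hiα) hvi]; exact hiα
    · intro hv
      simp only [Set.mem_iUnion]
      exact ⟨bf v, hv, hbA v⟩
  -- structure ↔ sortedness of block sequence
  have precedes_le : ∀ (R : ℕ → ℕ → Prop), s.Pairwise R → ∀ v w, Precedes π v w →
      R (bf v) (bf w) := by
    intro R hR v w hvw
    have hsub : [bf v, bf w].Sublist s := by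
      have := hvw.map bf
      simpa [hs] using this
    have := hR.sublist hsub
    rw [List.pairwise_cons] at this
    exact this.1 (bf w) (by simp)
  have vne : ∀ v w i j, i ∈ Set.Icc 1 k → j ∈ Set.Icc 1 k → i ≠ j →
      v ∈ A i → w ∈ A j → v ≠ w := by
    intro v w i j hi hj hij hv hw
    rintro rfl
    exact Set.disjoint_left.mp (hdisj i hi j hj hij) hv hw
  have struct_iff : HasStructure k A π ↔ s.Pairwise (· ≤ ·) := by
    constructor
    · intro hst
      rw [List.pairwise_iff_getElem]
      intro i j hi hj hij
      rw [hslen] at hi hj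
      have hsub : [π[i], π[j]].Sublist π := by
        have := List.map_getElem_sublist (l := π) (is := [⟨i, hi⟩, ⟨j, hj⟩])
          (by simp [List.pairwise_cons]; omega)
        simpa using this
      have e1 : s[i] = bf (π[i]) := by simp [hs]
      have e2 : s[j] = bf (π[j]) := by simp [hs]
      rw [e1, e2]
      rcases eq_or_ne (bf π[i]) (bf π[j]) with h | h
      · omega
      · have := (hst (bf π[i]) (hbmem _) (bf π[j]) (hbmem _) h
          (π[i]) (hbA _) (π[j]) (hbA _)).mp hsub
        omega
    · intro hsorted i hi j hj hij v hv w hw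
      have hbv : bf v = i := (buniq v i hi hv).symm
      have hbw : bf w = j := (buniq w j hj hw).symm
      have hvw : v ≠ w := vne v w i j hi hj hij hv hw
      constructor
      · intro hprec
        have := precedes_le _ hsorted v w hprec
        omega
      · intro hij'
        rcases prec_total π v w (hmemπ v) (hmemπ w) hvw with h | h
        · exact h
        · have := precedes_le _ hsorted w v h
          omega
  have struct_rev_iff : HasStructure k (fun i => A (k + 1 - i)) π ↔
      s.Pairwise (fun a b => b ≤ a) := by
    constructor
    · intro hst
      rw [List.pairwise_iff_getElem]
      intro i j hi hj hij
      rw [hslen] at hi hj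
      have hsub : [π[i], π[j]].Sublist π := by
        have := List.map_getElem_sublist (l := π) (is := [⟨i, hi⟩, ⟨j, hj⟩])
          (by simp [List.pairwise_cons]; omega)
        simpa using this
      have e1 : s[i] = bf (π[i]) := by simp [hs]
      have e2 : s[j] = bf (π[j]) := by simp [hs]
      rw [e1, e2]
      rcases eq_or_ne (bf π[i]) (bf π[j]) with h | h
      · omega
      · have hri := hbr (π[i])
        have hrj := hbr (π[j])
        have m1 : k + 1 - bf (π[i]) ∈ Set.Icc 1 k := by rw [Set.mem_Icc]; omega
        have m2 : k + 1 - bf (π[j]) ∈ Set.Icc 1 k := by rw [Set.mem_Icc]; omega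
        have hne12 : k + 1 - bf (π[i]) ≠ k + 1 - bf (π[j]) := by omega
        have hv1 : π[i] ∈ A (k + 1 - (k + 1 - bf (π[i]))) := by
          have hq : k + 1 - (k + 1 - bf (π[i])) = bf (π[i]) := by omega
          rw [hq]; exact hbA _
        have hv2 : π[j] ∈ A (k + 1 - (k + 1 - bf (π[j]))) := by
          have hq : k + 1 - (k + 1 - bf (π[j])) = bf (π[j]) := by omega
          rw [hq]; exact hbA _
        have := (hst (k + 1 - bf (π[i])) m1 (k + 1 - bf (π[j])) m2 hne12
          (π[i]) hv1 (π[j]) hv2).mp hsub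
        omega
    · intro hsorted i hi j hj hij v hv w hw
      rw [Set.mem_Icc] at hi hj
      have m1 : k + 1 - i ∈ Set.Icc 1 k := by rw [Set.mem_Icc]; omega
      have m2 : k + 1 - j ∈ Set.Icc 1 k := by rw [Set.mem_Icc]; omega
      have hbv : bf v = k + 1 - i := (buniq v _ m1 hv).symm
      have hbw : bf w = k + 1 - j := (buniq w _ m2 hw).symm
      have hvw : v ≠ w := vne v w _ _ m1 m2 (by omega) hv hw
      constructor
      · intro hprec
        have := precedes_le _ hsorted v w hprec
        omega
      · intro hij'
        rcases prec_total π v w (hmemπ v) (hmemπ w) hvw with h | h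
        · exact h
        · have := precedes_le _ hsorted w v h
          omega
  constructor
  · -- free ordering → structure
    intro hfree
    have hrange : ∀ i, i < s.length → 1 ≤ s.getD i 0 ∧ s.getD i 0 ≤ k := by
      intro i hi
      rw [hslen] at hi
      rw [hsget i hi]
      exact hbr _
    have hsurj : ∀ v, 1 ≤ v → v ≤ k → ∃ i, i < s.length ∧ s.getD i 0 = v := by
      intro v hv1 hv2
      obtain ⟨x, hx⟩ := hne v (by rw [Set.mem_Icc]; omega)
      obtain ⟨i, hi, hix⟩ := List.mem_iff_getElem.mp (hmemπ x)
      refine ⟨i, by omega, ?_⟩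
      rw [hsget i hi, hix]
      exact (buniq x v (by rw [Set.mem_Icc]; omega) hx).symm
    have hfree' : ∀ S T : Set ℕ, Good k S → Good k T → Disjoint S T → ¬ Alt5 S T s := by
      rintro S T ⟨a, b, c, d, ha1, hc1, hb1, hd1, rfl⟩ ⟨e, f, g, h', he1, hg1, hf1, hh1, rfl⟩
        hd hAlt
      obtain ⟨x1, y1, x2, y2, x3, hsub, m1, m2, m3, m4, m5⟩ := hAlt
      obtain ⟨l', hsubl, heq⟩ := List.sublist_map_iff.mp hsub
      match l', heq with
      | [w1, w2, w3, w4, w5], heq =>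
        simp only [List.map_cons, List.map_nil, List.cons.injEq, and_true] at heq
        obtain ⟨e1, e2, e3, e4, e5⟩ := heq
        have hsub1 : Set.Icc a b ⊆ Set.Icc 1 k := by
          intro x hx; rw [Set.mem_Icc] at hx ⊢; omega
        have hsub2 : Set.Icc c d ⊆ Set.Icc 1 k := by
          intro x hx; rw [Set.mem_Icc] at hx ⊢; omega
        have hsub3 : Set.Icc e f ⊆ Set.Icc 1 k := by
          intro x hx; rw [Set.mem_Icc] at hx ⊢; omega
        have hsub4 : Set.Icc g h' ⊆ Set.Icc 1 k := by
          intro x hx; rw [Set.mem_Icc] at hx ⊢; omega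
        have hEA : (⋃ i ∈ Set.Icc a b, A i) ∪ (⋃ j ∈ Set.Icc c d, A j) ∈
            {S | ∃ α β : Set ℕ, IsNatInterval k α ∧ IsNatInterval k β ∧
              S = (⋃ i ∈ α, A i) ∪ (⋃ j ∈ β, A j)} :=
          ⟨Set.Icc a b, Set.Icc c d, ⟨hsub1, a, b, rfl⟩, ⟨hsub2, c, d, rfl⟩, rfl⟩
        have hEB : (⋃ i ∈ Set.Icc e f, A i) ∪ (⋃ j ∈ Set.Icc g h', A j) ∈
            {S | ∃ α β : Set ℕ, IsNatInterval k α ∧ IsNatInterval k β ∧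
              S = (⋃ i ∈ α, A i) ∪ (⋃ j ∈ β, A j)} :=
          ⟨Set.Icc e f, Set.Icc g h', ⟨hsub3, e, f, rfl⟩, ⟨hsub4, g, h', rfl⟩, rfl⟩
        refine hfree _ hEA _ hEB ⟨[w1, w2, w3, w4, w5], hsubl, rfl, ?_⟩
        have memA : ∀ w : V, bf w ∈ Set.Icc a b ∪ Set.Icc c d →
            w ∈ ((⋃ i ∈ Set.Icc a b, A i) ∪ (⋃ j ∈ Set.Icc c d, A j)) \
              ((⋃ i ∈ Set.Icc e f, A i) ∪ (⋃ j ∈ Set.Icc g h', A j)) := by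
          intro w hw
          constructor
          · rcases hw with hw | hw
            · exact Or.inl ((mem_edge _ hsub1 w).mpr hw)
            · exact Or.inr ((mem_edge _ hsub2 w).mpr hw)
          · intro hcon
            have : bf w ∈ Set.Icc e f ∪ Set.Icc g h' := by
              rcases hcon with hc | hc
              · exact Or.inl ((mem_edge _ hsub3 w).mp hc)
              · exact Or.inr ((mem_edge _ hsub4 w).mp hc)
            exact Set.disjoint_left.mp hd hw this
        have memB : ∀ w : V, bf w ∈ Set.Icc e f ∪ Set.Icc g h' →
            w ∈ ((⋃ i ∈ Set.Icc e f, A i) ∪ (⋃ j ∈ Set.Icc g h', A j)) \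
              ((⋃ i ∈ Set.Icc a b, A i) ∪ (⋃ j ∈ Set.Icc c d, A j)) := by
          intro w hw
          constructor
          · rcases hw with hw | hw
            · exact Or.inl ((mem_edge _ hsub3 w).mpr hw)
            · exact Or.inr ((mem_edge _ hsub4 w).mpr hw)
          · intro hcon
            have : bf w ∈ Set.Icc a b ∪ Set.Icc c d := by
              rcases hcon with hc | hc
              · exact Or.inl ((mem_edge _ hsub1 w).mp hc)
              · exact Or.inr ((mem_edge _ hsub2 w).mp hc)
            exact Set.disjoint_left.mp hd this hw
        intro i h
        match i with
        | 0 => exact ⟨fun _ => memA w1 (by rw [← e1]; exact m1), fun hp => absurd hp (by omega)⟩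
        | 1 => exact ⟨fun hp => absurd hp (by omega), fun _ => memB w2 (by rw [← e2]; exact m4)⟩
        | 2 => exact ⟨fun _ => memA w3 (by rw [← e3]; exact m2), fun hp => absurd hp (by omega)⟩
        | 3 => exact ⟨fun hp => absurd hp (by omega), fun _ => memB w4 (by rw [← e4]; exact m5)⟩
        | 4 => exact ⟨fun _ => memA w5 (by rw [← e5]; exact m3), fun hp => absurd hp (by omega)⟩
        | (n+5) => exact absurd h (by simp)
    rcases core hk hrange hsurj hfree' with h | h
    · exact Or.inl (struct_iff.mpr h)
    · exact Or.inr (struct_rev_iff.mpr h)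
  · -- structure → free ordering
    intro hstruct EA hEA EB hEB hpat
    obtain ⟨α, β, ⟨hα1, a, b, rfl⟩, ⟨hβ1, c, d, rfl⟩, rfl⟩ := hEA
    obtain ⟨γ, δ, ⟨hγ1, e, f, rfl⟩, ⟨hδ1, g, h', rfl⟩, rfl⟩ := hEB
    obtain ⟨w, hsub, hlen, hcond⟩ := hpat
    match w, hlen with
    | [w0, w1, w2, w3, w4], _ =>
      have c0 := (hcond 0 (by simp)).1 (by omega)
      have c1 := (hcond 1 (by simp)).2 (by omega)
      have c2 := (hcond 2 (by simp)).1 (by omega)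
      have c3 := (hcond 3 (by simp)).2 (by omega)
      have c4 := (hcond 4 (by simp)).1 (by omega)
      simp only [List.getElem_cons_zero, List.getElem_cons_succ] at c0 c1 c2 c3 c4
      -- translate to block letters
      have tr : ∀ w : V, ∀ p q : Set ℕ, p ⊆ Set.Icc 1 k → q ⊆ Set.Icc 1 k →
          w ∈ ((⋃ i ∈ p, A i) ∪ (⋃ j ∈ q, A j)) → bf w ∈ p ∪ q := by
        intro w p q hp hq hw
        rcases hw with hw | hw
        · exact Or.inl ((mem_edge _ hp w).mp hw)
        · exact Or.inr ((mem_edge _ hq w).mp hw)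
      have ntr : ∀ w : V, ∀ p q : Set ℕ, p ⊆ Set.Icc 1 k → q ⊆ Set.Icc 1 k →
          w ∉ ((⋃ i ∈ p, A i) ∪ (⋃ j ∈ q, A j)) → bf w ∉ p ∪ q := by
        intro w p q hp hq hw hcon
        refine hw ?_
        rcases hcon with hc | hc
        · exact Or.inl ((mem_edge _ hp w).mpr hc)
        · exact Or.inr ((mem_edge _ hq w).mpr hc)
      have t0 := tr w0 _ _ hα1 hβ1 c0.1
      have t0' := ntr w0 _ _ hγ1 hδ1 c0.2
      have t1 := tr w1 _ _ hγ1 hδ1 c1.1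
      have t1' := ntr w1 _ _ hα1 hβ1 c1.2
      have t2 := tr w2 _ _ hα1 hβ1 c2.1
      have t2' := ntr w2 _ _ hγ1 hδ1 c2.2
      have t3 := tr w3 _ _ hγ1 hδ1 c3.1
      have t3' := ntr w3 _ _ hα1 hβ1 c3.2
      have t4 := tr w4 _ _ hα1 hβ1 c4.1
      have t4' := ntr w4 _ _ hγ1 hδ1 c4.2
      -- ordering of the block letters
      have hmapsub : [bf w0, bf w1, bf w2, bf w3, bf w4].Sublist s := by
        have := hsub.map bf
        simpa [hs] using this
      simp only [Set.mem_union, Set.mem_Icc, not_or] at t0 t0' t1 t1' t2 t2' t3 t3' t4 t4'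
      have chain5 : ∀ (R : ℕ → ℕ → Prop) (a b c d e : ℕ), List.Pairwise R [a, b, c, d, e] →
          R a b ∧ R b c ∧ R c d ∧ R d e := by
        intro R a b c d e hp
        simp only [List.pairwise_cons] at hp
        refine ⟨hp.1 b (by simp), hp.2.1 c (by simp), hp.2.2.1 d (by simp), hp.2.2.2.1 e (by simp)⟩
      rcases hstruct with hst | hst
      · have hp := (struct_iff.mp hst).sublist hmapsub
        obtain ⟨o01, o12, o23, o34⟩ := chain5 _ _ _ _ _ _ hp
        omega
      · have hp := (struct_rev_iff.mp hst).sublist hmapsub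
        obtain ⟨o01, o12, o23, o34⟩ := chain5 _ _ _ _ _ _ hp
        have p01 : bf w1 ≤ bf w0 := o01
        have p12 : bf w2 ≤ bf w1 := o12
        have p23 : bf w3 ≤ bf w2 := o23
        have p34 : bf w4 ≤ bf w3 := o34
        omega
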